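/- Let S be a symmetric unitary complex matrix on N-tuple indices. If there exist unitary matrices U_p (d_p×d_p) such that (⊗_p U_p)·S·(⊗_p U_p)ᵀ is diagonal (i.e. the conjugation θ(v) = S·conj(v) is Prod-measurable), then: (i) for every p the partial trace tr_{¬p}(S) is a symmetric matrix, and (ii) the matrix X = S⋆·(tr_{¬1}(S) ⊗ ⋯ ⊗ tr_{¬N}(S)) is normal, i.e. X·X⋆ = X⋆·X. -/
import Mathlib


open Matrix Kronecker

noncomputable section

/-- N-fold Kronecker product of matrices, on dependent-tuple indices. -/
def nKron {N : ℕ} {ι : Fin N → Type} (A : ∀ p, Matrix (ι p) (ι p) ℂ) :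
    Matrix (∀ p, ι p) (∀ p, ι p) ℂ :=
  Matrix.of fun i j => ∏ p, A p (i p) (j p)

/-- Partial trace over all subsystems except `p`. -/
def ptrace {N : ℕ} {d : Fin N → ℕ} (S : Matrix (∀ p, Fin (d p)) (∀ p, Fin (d p)) ℂ)
    (p : Fin N) : Matrix (Fin (d p)) (Fin (d p)) ℂ :=
  Matrix.of fun a b =>
    ∑ k : ∀ q, Fin (d q), if k p = a then S k (Function.update k p b) else 0

namespace StmtAux

variable {N : ℕ} {d : Fin N → ℕ}

lemma nKron_mul (A B : ∀ p, Matrix (Fin (d p)) (Fin (d p)) ℂ) :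
    nKron A * nKron B = nKron (fun p => A p * B p) := by
  ext i j
  simp only [Matrix.mul_apply, nKron, Matrix.of_apply]
  rw [Fintype.prod_sum (fun p x => A p (i p) x * B p x (j p))]
  exact Finset.sum_congr rfl fun k _ => Finset.prod_mul_distrib.symm

lemma nKron_transpose (A : ∀ p, Matrix (Fin (d p)) (Fin (d p)) ℂ) :
    (nKron A)ᵀ = nKron (fun p => (A p)ᵀ) := rfl

lemma nKron_conjTranspose (A : ∀ p, Matrix (Fin (d p)) (Fin (d p)) ℂ) :
    (nKron A)ᴴ = nKron (fun p => (A p)ᴴ) := by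
  ext i j
  show star (∏ p, A p (j p) (i p)) = ∏ p, star (A p (j p) (i p))
  exact star_prod _ _

lemma nKron_one : nKron (fun p => (1 : Matrix (Fin (d p)) (Fin (d p)) ℂ)) = 1 := by
  ext i j
  by_cases h : i = j
  · subst h; simp [nKron, Matrix.one_apply]
  · obtain ⟨p, hp⟩ := Function.ne_iff.mp h
    rw [Matrix.one_apply_ne h]
    exact Finset.prod_eq_zero (Finset.mem_univ p) (Matrix.one_apply_ne hp)

lemma nKron_isDiag {A : ∀ p, Matrix (Fin (d p)) (Fin (d p)) ℂ}
    (h : ∀ p, (A p).IsDiag) : (nKron A).IsDiag := by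
  intro i j hij
  obtain ⟨p, hp⟩ := Function.ne_iff.mp hij
  exact Finset.prod_eq_zero (Finset.mem_univ p) (h p hp)

lemma isDiag_mul {n : Type*} [Fintype n] [DecidableEq n]
    {A B : Matrix n n ℂ} (hA : A.IsDiag) (hB : B.IsDiag) : (A * B).IsDiag := by
  intro i j hij
  rw [Matrix.mul_apply]
  refine Finset.sum_eq_zero fun k _ => ?_
  by_cases hk : k = i
  · subst hk; rw [hB hij, mul_zero]
  · rw [hA (Ne.symm hk), zero_mul]

lemma isDiag_mul_comm {n : Type*} [Fintype n] [DecidableEq n]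
    {A B : Matrix n n ℂ} (hA : A.IsDiag) (hB : B.IsDiag) : A * B = B * A := by
  ext i j
  rw [Matrix.mul_apply, Matrix.mul_apply]
  refine Finset.sum_congr rfl fun k _ => ?_
  by_cases hk : i = k
  · subst hk
    by_cases hij : i = j
    · subst hij; ring
    · simp [hA hij, hB hij]
  · rw [hA hk, hB hk, zero_mul, zero_mul]

end StmtAux

namespace StmtAux

variable {N : ℕ} {d : Fin N → ℕ}

lemma ptrace_symm (S : Matrix (∀ p, Fin (d p)) (∀ p, Fin (d p)) ℂ) (hs : Sᵀ = S)
    (p : Fin N) : (ptrace S p)ᵀ = ptrace S p := by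
  have hSsym : ∀ i j, S j i = S i j := by
    intro i j
    conv_lhs => rw [← hs]
    rfl
  ext a b
  show ptrace S p b a = ptrace S p a b
  simp only [ptrace, Matrix.of_apply]
  have hinv : Function.Involutive
      (fun k : ∀ q, Fin (d q) => Function.update k p (Equiv.swap a b (k p))) := by
    intro k
    simp [Function.update_idem, Function.update_self]
  refine Fintype.sum_equiv hinv.toPerm _ _ fun k => ?_
  show (if k p = b then S k (Function.update k p a) else 0)
    = (if (Function.update k p (Equiv.swap a b (k p))) p = a then
      S (Function.update k p (Equiv.swap a b (k p)))
        (Function.update (Function.update k p (Equiv.swap a b (k p))) p b) else 0)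
  simp only [Function.update_self, Function.update_idem]
  by_cases hk : k p = b
  · rw [hk, Equiv.swap_apply_right, if_pos rfl, if_pos rfl]
    have h2 : Function.update k p b = k := by
      conv_lhs => rw [← hk]
      exact Function.update_eq_self p k
    rw [h2, hSsym]
  · have h1 : Equiv.swap a b (k p) ≠ a := fun h =>
      hk ((Equiv.swap a b).injective (h.trans (Equiv.swap_apply_right a b).symm))
    rw [if_neg h1, if_neg hk]

end StmtAux

namespace StmtAux

variable {N : ℕ} {d : Fin N → ℕ}

lemma nKron_unitary (U : ∀ p, Matrix (Fin (d p)) (Fin (d p)) ℂ)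
    (hU : ∀ p, (U p)ᴴ * U p = 1) : (nKron U)ᴴ * nKron U = 1 := by
  rw [nKron_conjTranspose, nKron_mul,
    show (fun p => (U p)ᴴ * U p) = (fun p => (1 : Matrix (Fin (d p)) (Fin (d p)) ℂ)) from
      funext hU, nKron_one]

lemma transpose_mul_conj {n : Type*} [Fintype n] [DecidableEq n]
    (W : Matrix n n ℂ) (hWW : Wᴴ * W = 1) : Wᵀ * W.map (starRingEnd ℂ) = 1 := by
  have h := congrArg (fun M : Matrix n n ℂ => M.map (starRingEnd ℂ)) hWW
  simp only [Matrix.map_mul] at h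
  rwa [show Wᴴ.map (starRingEnd ℂ) = Wᵀ from by
      ext i j; simp [Matrix.conjTranspose_apply, Matrix.map_apply],
    show (1 : Matrix n n ℂ).map (starRingEnd ℂ) = 1 from by
      ext i j; simp [Matrix.one_apply, Matrix.map_apply, apply_ite]] at h

lemma recover {n : Type*} [Fintype n] [DecidableEq n]
    (W S : Matrix n n ℂ) (hWW : Wᴴ * W = 1) :
    S = Wᴴ * ((W * S * Wᵀ) * W.map (starRingEnd ℂ)) := by
  have hTC := transpose_mul_conj W hWW
  simp only [Matrix.mul_assoc]
  rw [hTC, Matrix.mul_one, ← Matrix.mul_assoc, hWW, Matrix.one_mul]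

lemma key (S : Matrix (∀ p, Fin (d p)) (∀ p, Fin (d p)) ℂ)
    (U : ∀ p, Matrix (Fin (d p)) (Fin (d p)) ℂ)
    (hU : ∀ p, (U p)ᴴ * U p = 1)
    (hD : (nKron U * S * (nKron U)ᵀ).IsDiag) (p : Fin N) :
    (U p * ptrace S p * (U p)ᵀ).IsDiag := by
  classical
  set W := nKron U with hW
  set D := W * S * Wᵀ with hDdef
  have hWW : Wᴴ * W = 1 := nKron_unitary U hU
  have hS' : ∀ i j, S i j = ∑ m, starRingEnd ℂ (W m i) * (D m m * starRingEnd ℂ (W m j)) := by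
    intro i j
    conv_lhs => rw [recover W S hWW]
    rw [← hDdef, Matrix.mul_apply]
    refine Finset.sum_congr rfl fun m _ => ?_
    rw [Matrix.conjTranspose_apply, Matrix.mul_apply, Finset.sum_eq_single m]
    · simp only [starRingEnd_apply, Matrix.map_apply]
    · intro n _ hn
      rw [hD (Ne.symm hn), zero_mul]
    · intro h; exact absurd (Finset.mem_univ m) h
  intro a b hab
  have hA : U p * (U p)ᴴ = 1 := mul_eq_one_comm.mp (hU p)
  set R : (∀ q, Fin (d q)) → (∀ q, Fin (d q)) → ℂ :=
    fun m k => ∏ q ∈ Finset.univ.erase p, starRingEnd ℂ (U q (m q) (k q)) with hR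
  have f1 : ∀ (m k : ∀ q, Fin (d q)) (e : Fin (d p)),
      starRingEnd ℂ (W m (Function.update k p e)) = starRingEnd ℂ (U p (m p) e) * R m k := by
    intro m k e
    have h0 : W m (Function.update k p e) = ∏ q, U q (m q) (Function.update k p e q) := rfl
    rw [h0, map_prod, ← Finset.mul_prod_erase Finset.univ _ (Finset.mem_univ p)]
    congr 1
    · rw [Function.update_self]
    · refine Finset.prod_congr rfl fun q hq => ?_
      rw [Function.update_of_ne (Finset.ne_of_mem_erase hq)]
  have f2 : ∀ (m k : ∀ q, Fin (d q)),
      starRingEnd ℂ (W m k) = starRingEnd ℂ (U p (m p) (k p)) * R m k := by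
    intro m k
    have h0 : W m k = ∏ q, U q (m q) (k q) := rfl
    rw [h0, map_prod, ← Finset.mul_prod_erase Finset.univ _ (Finset.mem_univ p)]
  have f3 : ∀ (c x : Fin (d p)),
      ∑ e, U p c e * starRingEnd ℂ (U p x e) = (1 : Matrix (Fin (d p)) (Fin (d p)) ℂ) c x := by
    intro c x
    rw [← hA, Matrix.mul_apply]
    exact Finset.sum_congr rfl fun e _ => by
      rw [Matrix.conjTranspose_apply, starRingEnd_apply]
  show (U p * ptrace S p * (U p)ᵀ) a b = 0
  rw [Matrix.mul_apply]
  calc ∑ e, (U p * ptrace S p) a e * (U p)ᵀ e b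
      = ∑ e, ∑ k : ∀ q, Fin (d q), U p a (k p) * S k (Function.update k p e) * U p b e := by
        refine Finset.sum_congr rfl fun e _ => ?_
        rw [Matrix.mul_apply, Matrix.transpose_apply, Finset.sum_mul]
        simp only [ptrace, Matrix.of_apply, Finset.mul_sum, Finset.sum_mul, mul_ite, ite_mul,
          mul_zero, zero_mul]
        rw [Finset.sum_comm]
        refine Finset.sum_congr rfl fun k _ => ?_
        rw [Finset.sum_ite_eq]
        simp
    _ = ∑ k : ∀ q, Fin (d q), ∑ e, U p a (k p) * S k (Function.update k p e) * U p b e :=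
        Finset.sum_comm
    _ = ∑ k : ∀ q, Fin (d q), ∑ e, ∑ m : ∀ q, Fin (d q),
          U p a (k p) * (starRingEnd ℂ (W m k) * (D m m * starRingEnd ℂ (W m (Function.update k p e)))) * U p b e := by
        refine Finset.sum_congr rfl fun k _ => Finset.sum_congr rfl fun e _ => ?_
        rw [hS' k (Function.update k p e), Finset.mul_sum, Finset.sum_mul]
    _ = ∑ k : ∀ q, Fin (d q), ∑ m : ∀ q, Fin (d q), ∑ e,
          U p a (k p) * (starRingEnd ℂ (W m k) * (D m m * starRingEnd ℂ (W m (Function.update k p e)))) * U p b e :=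
        Finset.sum_congr rfl fun k _ => Finset.sum_comm
    _ = ∑ m : ∀ q, Fin (d q), ∑ k : ∀ q, Fin (d q), ∑ e,
          U p a (k p) * (starRingEnd ℂ (W m k) * (D m m * starRingEnd ℂ (W m (Function.update k p e)))) * U p b e :=
        Finset.sum_comm
    _ = 0 := ?_
  refine Finset.sum_eq_zero fun m _ => ?_
  have step : ∀ k : ∀ q, Fin (d q),
      (∑ e, U p a (k p) * (starRingEnd ℂ (W m k) * (D m m * starRingEnd ℂ (W m (Function.update k p e)))) * U p b e)
      = (D m m * (U p a (k p) * (starRingEnd ℂ (W m k) * R m k))) *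
          (1 : Matrix (Fin (d p)) (Fin (d p)) ℂ) b (m p) := by
    intro k
    have h1 : ∀ e, U p a (k p) * (starRingEnd ℂ (W m k) * (D m m * starRingEnd ℂ (W m (Function.update k p e)))) * U p b e
        = (D m m * (U p a (k p) * (starRingEnd ℂ (W m k) * R m k))) *
            (U p b e * starRingEnd ℂ (U p (m p) e)) := by
      intro e; rw [f1 m k e]; ring
    rw [Finset.sum_congr rfl fun e _ => h1 e, ← Finset.mul_sum, f3 b (m p)]
  rw [Finset.sum_congr rfl fun k _ => step k, ← Finset.sum_mul]
  by_cases hm : m p = b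
  · have hXz : ∑ k : ∀ q, Fin (d q), U p a (k p) * (starRingEnd ℂ (W m k) * R m k) = 0 := by
      set f : ∀ q, Fin (d q) → ℂ :=
        Function.update (fun q y => starRingEnd ℂ (U q (m q) y) * starRingEnd ℂ (U q (m q) y)) p
          (fun y => U p a y * starRingEnd ℂ (U p (m p) y)) with hf
      have hterm : ∀ k : ∀ q, Fin (d q),
          U p a (k p) * (starRingEnd ℂ (W m k) * R m k) = ∏ q, f q (k q) := by
        intro k
        rw [← Finset.mul_prod_erase Finset.univ (fun q => f q (k q)) (Finset.mem_univ p)]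
        have hfp : f p (k p) = U p a (k p) * starRingEnd ℂ (U p (m p) (k p)) := by
          rw [hf, Function.update_self]
        have hfq : ∀ q ∈ Finset.univ.erase p, f q (k q)
            = starRingEnd ℂ (U q (m q) (k q)) * starRingEnd ℂ (U q (m q) (k q)) := by
          intro q hq
          rw [hf]
          rw [Function.update_of_ne (Finset.ne_of_mem_erase hq)]
        rw [hfp, Finset.prod_congr rfl hfq, f2 m k, hR, Finset.prod_mul_distrib]
        ring
      rw [Finset.sum_congr rfl fun k _ => hterm k, ← Fintype.prod_sum f]
      refine Finset.prod_eq_zero (Finset.mem_univ p) ?_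
      have hfp : ∀ y, f p y = U p a y * starRingEnd ℂ (U p (m p) y) := fun y => by
        rw [hf, Function.update_self]
      rw [Finset.sum_congr rfl fun y _ => hfp y, f3 a (m p), hm]
      exact Matrix.one_apply_ne hab
    rw [← Finset.mul_sum, hXz, mul_zero, zero_mul]
  · rw [Matrix.one_apply_ne fun h => hm h.symm, mul_zero]

end StmtAux

theorem stmt8 {N : ℕ} {d : Fin N → ℕ}
    (S : Matrix (∀ p, Fin (d p)) (∀ p, Fin (d p)) ℂ) (hs : Sᵀ = S) (hu : Sᴴ * S = 1)
    (hprod : ∃ U : ∀ p, Matrix (Fin (d p)) (Fin (d p)) ℂ,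
      (∀ p, (U p)ᴴ * U p = 1) ∧ (nKron U * S * (nKron U)ᵀ).IsDiag) :
    (∀ p, (ptrace S p)ᵀ = ptrace S p) ∧
    (Sᴴ * nKron (fun p => ptrace S p)) * (Sᴴ * nKron (fun p => ptrace S p))ᴴ =
      (Sᴴ * nKron (fun p => ptrace S p))ᴴ * (Sᴴ * nKron (fun p => ptrace S p)) := by
  classical
  obtain ⟨U, hU, hdiag⟩ := hprod
  refine ⟨StmtAux.ptrace_symm S hs, ?_⟩
  set W := nKron U with hW
  set T := nKron (fun p => ptrace S p) with hT
  set C := W.map (starRingEnd ℂ) with hC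
  set D1 := W * S * Wᵀ with hD1def
  set D2 := W * T * Wᵀ with hD2def
  have hWW : Wᴴ * W = 1 := StmtAux.nKron_unitary U hU
  have hWW' : W * Wᴴ = 1 := mul_eq_one_comm.mp hWW
  have hTC : Wᵀ * C = 1 := StmtAux.transpose_mul_conj W hWW
  have hCT : C * Wᵀ = 1 := mul_eq_one_comm.mp hTC
  have hD1 : D1.IsDiag := hdiag
  have hD2 : D2.IsDiag := by
    rw [hD2def, hT, hW, StmtAux.nKron_transpose, StmtAux.nKron_mul, StmtAux.nKron_mul]
    exact StmtAux.nKron_isDiag fun p => StmtAux.key S U hU hdiag p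
  have hSid : S = Wᴴ * (D1 * C) := by rw [hD1def]; exact StmtAux.recover W S hWW
  have hTid : T = Wᴴ * (D2 * C) := by rw [hD2def]; exact StmtAux.recover W T hWW
  have hCH : Cᴴ = Wᵀ := by
    rw [hC]
    ext i j
    simp only [Matrix.conjTranspose_apply, Matrix.map_apply, starRingEnd_apply, star_star,
      Matrix.transpose_apply]
  have hTH : (Wᵀ)ᴴ = C := by
    rw [hC]
    ext i j
    simp only [Matrix.conjTranspose_apply, Matrix.map_apply, starRingEnd_apply,
      Matrix.transpose_apply]
  have cancel1 : ∀ X : Matrix (∀ p, Fin (d p)) (∀ p, Fin (d p)) ℂ, W * (Wᴴ * X) = X :=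
    fun X => by rw [← Matrix.mul_assoc, hWW', Matrix.one_mul]
  have cancel2 : ∀ X : Matrix (∀ p, Fin (d p)) (∀ p, Fin (d p)) ℂ, C * (Wᵀ * X) = X :=
    fun X => by rw [← Matrix.mul_assoc, hCT, Matrix.one_mul]
  have hX : Sᴴ * T = Wᵀ * (D1ᴴ * (D2 * C)) := by
    rw [hSid, hTid]
    simp only [Matrix.conjTranspose_mul, Matrix.conjTranspose_conjTranspose, hCH]
    simp only [Matrix.mul_assoc]
    rw [cancel1]
  have hXH : (Sᴴ * T)ᴴ = Wᵀ * (D2ᴴ * (D1 * C)) := by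
    rw [hX]
    simp only [Matrix.conjTranspose_mul, Matrix.conjTranspose_conjTranspose, hCH, hTH]
    simp only [Matrix.mul_assoc]
  have e1 : (D1ᴴ * D2).IsDiag := StmtAux.isDiag_mul hD1.conjTranspose hD2
  have e2 : (D2ᴴ * D1).IsDiag := StmtAux.isDiag_mul hD2.conjTranspose hD1
  have hmid : D1ᴴ * D2 * (D2ᴴ * D1) = D2ᴴ * D1 * (D1ᴴ * D2) := StmtAux.isDiag_mul_comm e1 e2
  rw [hXH, hX]
  calc Wᵀ * (D1ᴴ * (D2 * C)) * (Wᵀ * (D2ᴴ * (D1 * C)))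
      = Wᵀ * (D1ᴴ * D2 * (D2ᴴ * D1) * C) := by
        simp only [Matrix.mul_assoc]
        rw [cancel2]
    _ = Wᵀ * (D2ᴴ * D1 * (D1ᴴ * D2) * C) := by rw [hmid]
    _ = Wᵀ * (D2ᴴ * (D1 * C)) * (Wᵀ * (D1ᴴ * (D2 * C))) := by
        simp only [Matrix.mul_assoc]
        rw [cancel2]
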